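/- arXiv:math/0101100 — 2 statements merged into one kernel-verified Lean document; each statement's English description precedes it below -/
import Mathlib

section
/- Let A be a commutative ℚ-algebra, let u be an invertible element of A, and let L and θ be nilpotent elements of A, say L^K = 0 and θ^K = 0 for a natural number K ≥ 1 (so that u + L is invertible, and for any nilpotent x ∈ A one can define exp(x) := Σ_{j≥0} x^j / j!, a finite sum). Then for every natural number p ≥ 0 one has (u+L)^p · exp(θ·(u+L)^{-1}) = Σ_{k=0}^{p} [ Σ_{a=0}^{k} C(p-a, k-a) · L^{k-a} · θ^a / a! ] · u^{p-k} + θ^{p+1} · Σ_{k=0}^{2K} [ Σ_{b=0}^{k} (-1)^{k-b} · C(k, k-b) · L^{k-b} · θ^b / (p+1+b)! ] · u^{-(k+1)}, where C(·,·) denotes the binomial coefficient; all terms of the second sum with index k > 2K vanish, so the right-hand side is independent of enlarging the truncation bound. -/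
open Finset

private lemma chooseAux (n m : ℕ) :
    (n + 1 + m).choose m = (n + m).choose m + (n + m).choose (n + 1) := by
  cases m with
  | zero => simp
  | succ j =>
    have h1 : (n + 1 + (j + 1)).choose (j + 1)
        = (n + 1 + j).choose j + (n + 1 + j).choose (j + 1) := by
      rw [show n + 1 + (j + 1) = (n + 1 + j) + 1 by omega]
      exact Nat.choose_succ_succ _ _
    have h2 : (n + 1 + j).choose j = (n + 1 + j).choose (n + 1) := by
      have := Nat.choose_symm (n := n + 1 + j) (k := n + 1) (by omega)
      rw [show n + 1 + j - (n + 1) = j by omega] at this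
      exact this
    have h3 : n + (j + 1) = n + 1 + j := by omega
    rw [h1, h2, h3, Nat.add_comm ((n+1+j).choose (n+1))]

private lemma sum_shift {M : Type*} [AddCommGroup M] (K : ℕ) (h : ℕ → M) :
    ∑ m ∈ range K, h m - ∑ m ∈ range K, h (m + 1) = h 0 - h K := by
  have a := Finset.sum_range_succ h K
  have b := Finset.sum_range_succ' h K
  rw [a] at b
  rw [sub_eq_sub_iff_add_eq_add, b]
  abel

private lemma aux_invpow {A : Type*} [CommRing A] [Algebra ℚ A] (K : ℕ) (u L : A)
    (hu : IsUnit u) (hL : L ^ K = 0) (n : ℕ) :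
    Ring.inverse (u + L) ^ (n + 1) =
      ∑ m ∈ range K,
        (((-1 : ℚ) ^ m * ((n + m).choose m : ℚ)) • (L ^ m * Ring.inverse u ^ (n + 1 + m))) := by
  set ui := Ring.inverse u with hui
  have huL : IsUnit (u + L) :=
    IsNilpotent.isUnit_add_left_of_commute ⟨K, hL⟩ hu (Commute.all _ _)
  have hu1 : ∀ k : ℕ, u * ui ^ (k + 1) = ui ^ k := by
    intro k
    rw [pow_succ', ← mul_assoc, Ring.mul_inverse_cancel u hu, one_mul]
  -- T n is the candidate for (inverse (u+L))^(n+1)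
  set T : ℕ → A := fun n =>
    ∑ m ∈ range K, (((-1 : ℚ) ^ m * ((n + m).choose m : ℚ)) • (L ^ m * ui ^ (n + 1 + m)))
    with hT
  have base : (u + L) * T 0 = 1 := by
    have expand : (u + L) * T 0 =
        (∑ m ∈ range K, ((-1 : ℚ) ^ m • (L ^ m * ui ^ m)))
          - ∑ m ∈ range K, ((-1 : ℚ) ^ (m + 1) • (L ^ (m + 1) * ui ^ (m + 1))) := by
      rw [hT, add_mul, Finset.mul_sum, Finset.mul_sum, sub_eq_add_neg, ← Finset.sum_neg_distrib]
      congr 1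
      · refine Finset.sum_congr rfl fun m _ => ?_
        rw [mul_smul_comm]
        congr 1
        · simp
        · rw [show 0 + 1 + m = m + 1 by omega, mul_left_comm, hu1 m]
      · refine Finset.sum_congr rfl fun m _ => ?_
        rw [mul_smul_comm]
        rw [show (-1 : ℚ) ^ (m + 1) = -(-1 : ℚ) ^ m by ring, neg_smul, neg_neg]
        congr 1
        · simp
        · rw [show 0 + 1 + m = m + 1 by omega]
          ring
    rw [expand, sum_shift K (fun m => ((-1 : ℚ) ^ m • (L ^ m * ui ^ m)))]
    simp [hL]
  have key : ∀ n : ℕ, (u + L) * T (n + 1) = T n := by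
    intro n
    set h : ℕ → A := fun m =>
      (((-1 : ℚ) ^ m * ((n + m).choose (n + 1) : ℚ)) • (L ^ m * ui ^ (n + 1 + m))) with hh
    have hshift : ∑ m ∈ range K, h m = ∑ m ∈ range K, h (m + 1) := by
      have h0 : h 0 = 0 := by simp [hh]
      have hK : h K = 0 := by simp [hh, hL]
      have := sum_shift K h
      rw [h0, hK, sub_self, sub_eq_zero] at this
      exact this
    have expand : (u + L) * T (n + 1) =
        (∑ m ∈ range K,
            (((-1 : ℚ) ^ m * ((n + 1 + m).choose m : ℚ)) • (L ^ m * ui ^ (n + 1 + m))))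
          - ∑ m ∈ range K, h (m + 1) := by
      rw [hT, add_mul, Finset.mul_sum, Finset.mul_sum, sub_eq_add_neg, ← Finset.sum_neg_distrib]
      congr 1
      · refine Finset.sum_congr rfl fun m _ => ?_
        rw [mul_smul_comm]
        congr 1
        rw [show n + 1 + 1 + m = (n + 1 + m) + 1 by omega, mul_left_comm, hu1]
      · refine Finset.sum_congr rfl fun m _ => ?_
        rw [mul_smul_comm, hh]
        simp only
        rw [show (-1 : ℚ) ^ (m + 1) = -(-1 : ℚ) ^ m by ring]
        have hc : ((n + (m + 1)).choose (n + 1) : ℚ) = ((n + 1 + m).choose m : ℚ) := by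
          norm_cast
          have := Nat.choose_symm (n := n + 1 + m) (k := n + 1) (by omega)
          rw [show n + 1 + m - (n + 1) = m by omega] at this
          rw [show n + (m + 1) = n + 1 + m by omega]
          exact this.symm
        rw [hc, neg_mul, neg_smul, neg_neg]
        congr 1
        rw [show n + 1 + (m + 1) = n + 1 + 1 + m by omega]
        ring
    rw [expand, hT]
    rw [sub_eq_iff_eq_add, ← hshift]
    rw [← Finset.sum_add_distrib]
    refine Finset.sum_congr rfl fun m _ => ?_
    rw [hh]
    simp only
    rw [← add_smul]
    congr 1
    rw [← mul_add]
    congr 1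
    norm_cast
    exact chooseAux n m
  have powkey : ∀ n : ℕ, (u + L) ^ (n + 1) * T n = 1 := by
    intro n
    induction n with
    | zero => simpa using base
    | succ n ih =>
      rw [show n + 1 + 1 = (n + 1) + 1 by omega, pow_succ, mul_assoc, key, ih]
  have h1 : Ring.inverse (u + L) ^ (n + 1) * ((u + L) ^ (n + 1) * T n)
      = Ring.inverse (u + L) ^ (n + 1) := by rw [powkey, mul_one]
  calc Ring.inverse (u + L) ^ (n + 1)
      = Ring.inverse (u + L) ^ (n + 1) * ((u + L) ^ (n + 1) * T n) := h1.symm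
    _ = (Ring.inverse (u + L) * (u + L)) ^ (n + 1) * T n := by rw [← mul_assoc, ← mul_pow]
    _ = T n := by rw [Ring.inverse_mul_cancel _ huL, one_pow, one_mul]

theorem higher_genus_toric_lemma46_first
    {A : Type*} [CommRing A] [Algebra ℚ A]
    (K : ℕ) (hK : 1 ≤ K) (u L θ : A) (hu : IsUnit u)
    (hL : L ^ K = 0) (hθ : θ ^ K = 0) (p : ℕ) :
    (u + L) ^ p *
      (∑ j ∈ Finset.range K, ((j.factorial : ℚ)⁻¹) • (θ * Ring.inverse (u + L)) ^ j)
    =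
    (∑ k ∈ Finset.range (p + 1),
        (∑ a ∈ Finset.range (k + 1),
            (((p - a).choose (k - a) : ℚ) / (a.factorial : ℚ)) • (L ^ (k - a) * θ ^ a))
          * u ^ (p - k))
    +
    θ ^ (p + 1) *
      (∑ k ∈ Finset.range (2 * K + 1),
        (∑ b ∈ Finset.range (k + 1),
            (((-1 : ℚ) ^ (k - b) * (k.choose (k - b) : ℚ)) / ((p + 1 + b).factorial : ℚ)) •
              (L ^ (k - b) * θ ^ b))
          * (Ring.inverse u) ^ (k + 1)) := by
  have hθz : ∀ j, K ≤ j → θ ^ j = 0 := fun j hj => pow_eq_zero_of_le hj hθ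
  have hLz : ∀ m, K ≤ m → L ^ m = 0 := fun m hm => pow_eq_zero_of_le hm hL
  have huL : IsUnit (u + L) :=
    IsNilpotent.isUnit_add_left_of_commute ⟨K, hL⟩ hu (Commute.all _ _)
  have step1 : (u + L) ^ p *
      (∑ j ∈ range K, ((j.factorial : ℚ)⁻¹) • (θ * Ring.inverse (u + L)) ^ j)
      = ∑ j ∈ range (p + 1 + K),
          ((j.factorial : ℚ)⁻¹) • (θ ^ j * (Ring.inverse (u + L) ^ j * (u + L) ^ p)) := by
    rw [Finset.mul_sum]
    have e1 : ∀ j ∈ range K,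
        (u + L) ^ p * (((j.factorial : ℚ)⁻¹) • (θ * Ring.inverse (u + L)) ^ j)
          = ((j.factorial : ℚ)⁻¹) • (θ ^ j * (Ring.inverse (u + L) ^ j * (u + L) ^ p)) := by
      intro j _
      rw [mul_smul_comm, mul_pow]
      congr 1
      ring
    rw [Finset.sum_congr rfl e1]
    refine Finset.sum_subset (Finset.range_subset_range.2 (by omega)) fun j _ hj => ?_
    rw [Finset.mem_range, not_lt] at hj
    rw [hθz j hj, zero_mul, smul_zero]
  have step2 : ∑ j ∈ range (p + 1 + K),
      ((j.factorial : ℚ)⁻¹) • (θ ^ j * (Ring.inverse (u + L) ^ j * (u + L) ^ p))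
      = (∑ j ∈ range (p + 1),
          ((j.factorial : ℚ)⁻¹) • (θ ^ j * (Ring.inverse (u + L) ^ j * (u + L) ^ p)))
        + ∑ b ∈ range K,
          (((p + 1 + b).factorial : ℚ)⁻¹) •
            (θ ^ (p + 1 + b) * (Ring.inverse (u + L) ^ (p + 1 + b) * (u + L) ^ p)) :=
    Finset.sum_range_add _ (p + 1) K
  have part1 : ∑ j ∈ range (p + 1),
      ((j.factorial : ℚ)⁻¹) • (θ ^ j * (Ring.inverse (u + L) ^ j * (u + L) ^ p))
      = ∑ k ∈ range (p + 1),
          (∑ a ∈ range (k + 1),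
            (((p - a).choose (k - a) : ℚ) / (a.factorial : ℚ)) • (L ^ (k - a) * θ ^ a))
          * u ^ (p - k) := by
    have hvipow : ∀ j ≤ p, Ring.inverse (u + L) ^ j * (u + L) ^ p = (u + L) ^ (p - j) := by
      intro j hj
      calc Ring.inverse (u + L) ^ j * (u + L) ^ p
          = Ring.inverse (u + L) ^ j * ((u + L) ^ j * (u + L) ^ (p - j)) := by
            rw [← pow_add]; congr 2; omega
        _ = (Ring.inverse (u + L) * (u + L)) ^ j * (u + L) ^ (p - j) := by
            rw [← mul_assoc, ← mul_pow]
        _ = (u + L) ^ (p - j) := by rw [Ring.inverse_mul_cancel _ huL, one_pow, one_mul]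
    calc ∑ j ∈ range (p + 1),
        ((j.factorial : ℚ)⁻¹) • (θ ^ j * (Ring.inverse (u + L) ^ j * (u + L) ^ p))
        = ∑ j ∈ range (p + 1), ∑ m ∈ range (p + 1 - j),
            (((p - j).choose m : ℚ) / (j.factorial : ℚ)) •
              (L ^ m * θ ^ j * u ^ (p - j - m)) := by
          refine Finset.sum_congr rfl fun j hj => ?_
          rw [Finset.mem_range] at hj
          rw [hvipow j (by omega), show u + L = L + u from add_comm u L, add_pow,
            Finset.mul_sum, Finset.smul_sum, show p + 1 - j = p - j + 1 by omega]
          refine Finset.sum_congr rfl fun m hm => ?_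
          rw [div_eq_inv_mul, mul_smul, Nat.cast_smul_eq_nsmul, nsmul_eq_mul]
          congr 1
          ring
      _ = ∑ k ∈ range (p + 1), ∑ a ∈ range (k + 1),
            (((p - a).choose (k - a) : ℚ) / (a.factorial : ℚ)) •
              (L ^ (k - a) * θ ^ a * u ^ (p - a - (k - a))) :=
          (Finset.sum_range_diag_flip (p + 1)
            (fun a c => (((p - a).choose c : ℚ) / (a.factorial : ℚ)) •
              (L ^ c * θ ^ a * u ^ (p - a - c)))).symm
      _ = ∑ k ∈ range (p + 1),
          (∑ a ∈ range (k + 1),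
            (((p - a).choose (k - a) : ℚ) / (a.factorial : ℚ)) • (L ^ (k - a) * θ ^ a))
          * u ^ (p - k) := by
          refine Finset.sum_congr rfl fun k hk => ?_
          rw [Finset.sum_mul]
          refine Finset.sum_congr rfl fun a ha => ?_
          rw [Finset.mem_range] at ha
          rw [show p - a - (k - a) = p - k by omega, smul_mul_assoc]
  have part2 : ∑ b ∈ range K,
      (((p + 1 + b).factorial : ℚ)⁻¹) •
        (θ ^ (p + 1 + b) * (Ring.inverse (u + L) ^ (p + 1 + b) * (u + L) ^ p))
      = θ ^ (p + 1) *
        (∑ k ∈ range (2 * K + 1),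
          (∑ b ∈ range (k + 1),
              (((-1 : ℚ) ^ (k - b) * (k.choose (k - b) : ℚ)) / ((p + 1 + b).factorial : ℚ)) •
                (L ^ (k - b) * θ ^ b))
            * (Ring.inverse u) ^ (k + 1)) := by
    have hvib : ∀ b : ℕ, Ring.inverse (u + L) ^ (p + 1 + b) * (u + L) ^ p
        = Ring.inverse (u + L) ^ (b + 1) := by
      intro b
      calc Ring.inverse (u + L) ^ (p + 1 + b) * (u + L) ^ p
          = Ring.inverse (u + L) ^ (b + 1) * (Ring.inverse (u + L) ^ p * (u + L) ^ p) := by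
            rw [← mul_assoc, ← pow_add]; congr 2; omega
        _ = Ring.inverse (u + L) ^ (b + 1) := by
            rw [← mul_pow, Ring.inverse_mul_cancel _ huL, one_pow, mul_one]
    calc ∑ b ∈ range K,
        (((p + 1 + b).factorial : ℚ)⁻¹) •
          (θ ^ (p + 1 + b) * (Ring.inverse (u + L) ^ (p + 1 + b) * (u + L) ^ p))
        = ∑ b ∈ range K, ∑ m ∈ range K,
            ((((-1 : ℚ) ^ m * ((b + m).choose m : ℚ))) / ((p + 1 + b).factorial : ℚ)) •
              (θ ^ (p + 1) * (L ^ m * θ ^ b * Ring.inverse u ^ (b + 1 + m))) := by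
          refine Finset.sum_congr rfl fun b hb => ?_
          rw [hvib b, aux_invpow K u L hu hL b, Finset.mul_sum, Finset.smul_sum]
          refine Finset.sum_congr rfl fun m hm => ?_
          rw [mul_smul_comm, smul_smul]
          rw [show p + 1 + b = (p + 1) + b by omega, pow_add θ]
          congr 1
          all_goals ring
      _ = ∑ b ∈ range (2 * K + 1), ∑ m ∈ range (2 * K + 1 - b),
            ((((-1 : ℚ) ^ m * ((b + m).choose m : ℚ))) / ((p + 1 + b).factorial : ℚ)) •
              (θ ^ (p + 1) * (L ^ m * θ ^ b * Ring.inverse u ^ (b + 1 + m))) := by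
          have inner : ∀ b ∈ range K,
              (∑ m ∈ range K,
                ((((-1 : ℚ) ^ m * ((b + m).choose m : ℚ))) / ((p + 1 + b).factorial : ℚ)) •
                  (θ ^ (p + 1) * (L ^ m * θ ^ b * Ring.inverse u ^ (b + 1 + m))))
              = ∑ m ∈ range (2 * K + 1 - b),
                ((((-1 : ℚ) ^ m * ((b + m).choose m : ℚ))) / ((p + 1 + b).factorial : ℚ)) •
                  (θ ^ (p + 1) * (L ^ m * θ ^ b * Ring.inverse u ^ (b + 1 + m))) := by
            intro b hb
            rw [Finset.mem_range] at hb
            refine Finset.sum_subset (Finset.range_subset_range.2 (by omega)) fun m _ hm => ?_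
            rw [Finset.mem_range, not_lt] at hm
            rw [hLz m hm, zero_mul, zero_mul, mul_zero, smul_zero]
          rw [Finset.sum_congr rfl inner]
          refine Finset.sum_subset (Finset.range_subset_range.2 (by omega)) fun b _ hb => ?_
          rw [Finset.mem_range, not_lt] at hb
          refine Finset.sum_eq_zero fun m _ => ?_
          rw [hθz b hb, mul_zero, zero_mul, mul_zero, smul_zero]
      _ = ∑ k ∈ range (2 * K + 1), ∑ b ∈ range (k + 1),
            ((((-1 : ℚ) ^ (k - b) * ((b + (k - b)).choose (k - b) : ℚ))) /
                ((p + 1 + b).factorial : ℚ)) •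
              (θ ^ (p + 1) * (L ^ (k - b) * θ ^ b * Ring.inverse u ^ (b + 1 + (k - b)))) :=
          (Finset.sum_range_diag_flip (2 * K + 1)
            (fun b m => ((((-1 : ℚ) ^ m * ((b + m).choose m : ℚ))) /
                ((p + 1 + b).factorial : ℚ)) •
              (θ ^ (p + 1) * (L ^ m * θ ^ b * Ring.inverse u ^ (b + 1 + m))))).symm
      _ = θ ^ (p + 1) *
          (∑ k ∈ range (2 * K + 1),
            (∑ b ∈ range (k + 1),
                (((-1 : ℚ) ^ (k - b) * (k.choose (k - b) : ℚ)) /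
                  ((p + 1 + b).factorial : ℚ)) • (L ^ (k - b) * θ ^ b))
              * (Ring.inverse u) ^ (k + 1)) := by
          rw [Finset.mul_sum]
          refine Finset.sum_congr rfl fun k hk => ?_
          rw [Finset.sum_mul, Finset.mul_sum]
          refine Finset.sum_congr rfl fun b hb => ?_
          rw [Finset.mem_range] at hb
          rw [show b + (k - b) = k by omega, show b + 1 + (k - b) = k + 1 by omega,
            smul_mul_assoc, mul_smul_comm]
  rw [step1, step2, part1, part2]
end

section
/- Let l, n ≥ 1 and r = l + n, let (a^λ_ν), λ ∈ {1,…,l}, ν ∈ {1,…,n}, be a matrix of integers, and let N_1, …, N_r be positive integers. Let the real torus T_ℝ = (S¹)^l (the group of l-tuples of complex numbers of modulus 1) act on ℂ^r by t · z = (χ_1(t) z_1, …, χ_r(t) z_r) and on ℂ^{N_1} × ⋯ × ℂ^{N_r} by t · w = (χ_1(t) w^1, …, χ_r(t) w^r), where the characters are χ_λ(t) = t_λ for λ ∈ {1,…,l} and χ_{l+ν}(t) = Π_{λ=1}^{l} t_λ^{a^λ_ν} for ν ∈ {1,…,n}. Define m : ℂ^r → ℝ^l by m(z)_λ = (1/2)(|z_λ|²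 + Σ_{ν=1}^{n} a^λ_ν |z_{l+ν}|²) and 𝓜 : ℂ^{N_1} × ⋯ × ℂ^{N_r} → ℝ^l by 𝓜(w)_λ = (1/2)(‖w^λ‖² + Σ_{ν=1}^{n} a^λ_ν ‖w^{l+ν}‖²). Then for every a ∈ ℝ^l: if T_ℝ acts freely on m^{-1}(a) (i.e., for all z ∈ m^{-1}(a) and t ∈ T_ℝ, t · z = z implies t = 1), then T_ℝ acts freely on 𝓜^{-1}(a). -/
/-!
Freeness step in the proof of Lemma 2.3 of "Higher genus curves on toric
varieties": if the real torus `T_ℝ = (S¹)^l` acts freely on the moment level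
set `m⁻¹(a) ⊆ ℂ^r` (`r = l + n`, identified with `Fin l ⊕ Fin n → ℂ`), then it
acts freely on the level set `𝓜⁻¹(a) ⊆ ℂ^{N_1} × ⋯ × ℂ^{N_r}`.
-/

/-- The characters of the torus action: `χ_λ(t) = t_λ` on the first `l`
coordinates and `χ_{l+ν}(t) = ∏_λ t_λ^{a^λ_ν}` on the last `n` ones. -/
noncomputable def toricChar (l n : ℕ) (a : Fin l → Fin n → ℤ)
    (t : Fin l → ℂ) : Fin l ⊕ Fin n → ℂ :=
  Sum.elim t (fun ν => ∏ lam : Fin l, t lam ^ a lam ν)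

/-- The moment map `m : ℂ^{l+n} → ℝ^l`,
`m(z)_λ = (1/2)(|z_λ|² + ∑_ν a^λ_ν |z_{l+ν}|²)`. -/
noncomputable def momentSmall (l n : ℕ) (a : Fin l → Fin n → ℤ)
    (z : Fin l ⊕ Fin n → ℂ) : Fin l → ℝ :=
  fun lam => (1 / 2 : ℝ) *
    ((‖z (Sum.inl lam)‖) ^ 2 +
      ∑ ν : Fin n, (a lam ν : ℝ) * (‖z (Sum.inr ν)‖) ^ 2)

/-- The moment map `𝓜 : ℂ^{N_1} × ⋯ × ℂ^{N_r} → ℝ^l`,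
`𝓜(w)_λ = (1/2)(‖w^λ‖² + ∑_ν a^λ_ν ‖w^{l+ν}‖²)`, where `w^ρ ∈ ℂ^{N_ρ}` is the
`ρ`-th block of `w` and `‖·‖` is the standard Hermitian norm. -/
noncomputable def momentBig (l n : ℕ) (a : Fin l → Fin n → ℤ)
    (N : Fin l ⊕ Fin n → ℕ)
    (w : (ρ : Fin l ⊕ Fin n) → EuclideanSpace ℂ (Fin (N ρ))) : Fin l → ℝ :=
  fun lam => (1 / 2 : ℝ) *
    (‖w (Sum.inl lam)‖ ^ 2 + ∑ ν : Fin n, (a lam ν : ℝ) * ‖w (Sum.inr ν)‖ ^ 2)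

/-- If the real torus `(S¹)^l` (tuples `t` with `|t_λ| = 1`) acts freely on
`m⁻¹(a)` via `t · z = (χ_ρ(t) z_ρ)_ρ`, then it acts freely on `𝓜⁻¹(a)` via
`t · w = (χ_ρ(t) w^ρ)_ρ`. -/
theorem higher_genus_toric_free_action
    (l n : ℕ) (hl : 1 ≤ l) (hn : 1 ≤ n) (a : Fin l → Fin n → ℤ)
    (N : Fin l ⊕ Fin n → ℕ) (hN : ∀ ρ, 0 < N ρ) (avec : Fin l → ℝ)
    (hfree : ∀ z : Fin l ⊕ Fin n → ℂ, momentSmall l n a z = avec →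
      ∀ t : Fin l → ℂ, (∀ lam, ‖t lam‖ = 1) →
        (∀ ρ, toricChar l n a t ρ * z ρ = z ρ) → ∀ lam, t lam = 1) :
    ∀ w : (ρ : Fin l ⊕ Fin n) → EuclideanSpace ℂ (Fin (N ρ)),
      momentBig l n a N w = avec →
      ∀ t : Fin l → ℂ, (∀ lam, ‖t lam‖ = 1) →
        (∀ ρ, toricChar l n a t ρ • w ρ = w ρ) → ∀ lam, t lam = 1 := by
  intro w hw t ht hfix
  set z : Fin l ⊕ Fin n → ℂ := fun ρ => (‖w ρ‖ : ℂ) with hzdef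
  have habs : ∀ ρ, ‖z ρ‖ = ‖w ρ‖ := by
    intro ρ; simp [hzdef]
  have hz : momentSmall l n a z = avec := by
    funext lam
    have h := congrFun hw lam
    simp only [momentSmall, momentBig] at h ⊢
    rw [← h]
    congr 1
    congr 1
    · rw [habs]
    · exact Finset.sum_congr rfl fun ν _ => by rw [habs]
  refine hfree z hz t ht ?_ 
  intro ρ
  by_cases h0 : w ρ = 0
  · simp [hzdef, h0]
  · have hchi : toricChar l n a t ρ = 1 := by
      have h : (toricChar l n a t ρ - 1) • w ρ = 0 := by
        rw [sub_smul, one_smul, hfix ρ, sub_self]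
      rcases smul_eq_zero.mp h with h1 | h1
      · exact sub_eq_zero.mp h1
      · exact absurd h1 h0
    rw [hchi, one_mul]
end
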